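/- For every n ≥ 1 and every simple graph Y on n vertices, the diameter of any connected component of the friends-and-strangers graph FS(Path_n, Y) is at most |E(Y)|, the number of edges of Y. -/

import Mathlib

open SimpleGraph

/-- Adjacency in the friends-and-strangers graph: bijections `σ` and `τ` are adjacent iff there
is an edge `{a, b}` of `X` such that `{σ a, σ b}` is an edge of `Y`, `σ a = τ b`, `σ b = τ a`,
and `σ c = τ c` for every vertex `c` other than `a` and `b`. -/
def fsAdj {α β : Type*} (X : SimpleGraph α) (Y : SimpleGraph β) (σ τ : α ≃ β) : Prop :=
  ∃ a b : α, X.Adj a b ∧ Y.Adj (σ a) (σ b) ∧ σ a = τ b ∧ σ b = τ a ∧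
    ∀ c : α, c ≠ a → c ≠ b → σ c = τ c

/-- The friends-and-strangers graph `FS(X, Y)` of two simple graphs on the same number of
vertices; its vertices are bijections from `V(X)` to `V(Y)`. -/
def FS {α β : Type*} (X : SimpleGraph α) (Y : SimpleGraph β) : SimpleGraph (α ≃ β) where
  Adj := fsAdj X Y
  symm := by
    constructor
    rintro σ τ ⟨a, b, hX, hY, h1, h2, h3⟩
    refine ⟨a, b, hX, ?_, h2.symm, h1.symm, fun c hca hcb => (h3 c hca hcb).symm⟩
    rw [← h2, ← h1]
    exact hY.symm
  loopless := by
    constructor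
    rintro σ ⟨a, b, hX, hY, h1, _, _⟩
    exact hX.ne (σ.injective h1)

section Aux

variable {n : ℕ} {Y : SimpleGraph (Fin n)}

lemma swap_lt_swap {a b x y : Fin n} (hab : a.val + 1 = b.val)
    (h1 : ¬(x = a ∧ y = b)) (h2 : ¬(x = b ∧ y = a)) :
    (x < y ↔ Equiv.swap a b x < Equiv.swap a b y) := by
  rw [Equiv.swap_apply_def, Equiv.swap_apply_def]
  simp only [Fin.ext_iff, Fin.lt_def, not_and] at *
  split_ifs <;> try (first | exact Iff.rfl | fin_omega)

/-- One FS-step along the path means post-composing with a swap of two consecutive positions. -/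
lemma fsAdj_step {σ π : Fin n ≃ Fin n} (h : fsAdj (pathGraph n) Y σ π) :
    ∃ a b : Fin n, a.val + 1 = b.val ∧ Y.Adj (σ a) (σ b) ∧
      π = (Equiv.swap a b).trans σ := by
  obtain ⟨a, b, hX, hY, h1, h2, h3⟩ := h
  have heq : π = (Equiv.swap a b).trans σ := by
    apply Equiv.ext; intro c
    simp only [Equiv.trans_apply]
    rcases eq_or_ne c a with rfl|hca
    · rw [Equiv.swap_apply_left]; exact h2.symm
    rcases eq_or_ne c b with rfl|hcb
    · rw [Equiv.swap_apply_right]; exact h1.symm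
    · rw [Equiv.swap_apply_of_ne_of_ne hca hcb]; exact (h3 c hca hcb).symm
  rw [pathGraph_adj] at hX
  rcases hX with hab|hba
  · exact ⟨a, b, hab, hY, heq⟩
  · exact ⟨b, a, hba, hY.symm, by rw [heq, Equiv.swap_comm]⟩

/-- One FS-step preserves the relative order of non-`Y`-adjacent pairs. -/
lemma fsAdj_order {σ π : Fin n ≃ Fin n} (h : fsAdj (pathGraph n) Y σ π)
    {u v : Fin n} (huv : ¬ Y.Adj u v) :
    (σ.symm u < σ.symm v ↔ π.symm u < π.symm v) := by
  obtain ⟨a, b, hab, hY, rfl⟩ := fsAdj_step h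
  simp only [Equiv.symm_trans_apply, Equiv.symm_swap]
  apply swap_lt_swap hab
  · rintro ⟨hx, hy⟩
    apply huv
    have hu : u = σ a := by rw [← hx]; simp
    have hv : v = σ b := by rw [← hy]; simp
    rw [hu, hv]; exact hY
  · rintro ⟨hx, hy⟩
    apply huv
    have hu : u = σ b := by rw [← hx]; simp
    have hv : v = σ a := by rw [← hy]; simp
    rw [hu, hv]; exact hY.symm

/-- Reachability in `FS(Path, Y)` preserves the relative order of non-adjacent pairs. -/
lemma reach_order {σ τ : Fin n ≃ Fin n} (h : (FS (pathGraph n) Y).Reachable σ τ)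
    {u v : Fin n} (huv : ¬ Y.Adj u v) :
    (σ.symm u < σ.symm v ↔ τ.symm u < τ.symm v) := by
  obtain ⟨p⟩ := h
  induction p with
  | nil => exact Iff.rfl
  | cons hadj _ ih => exact (fsAdj_order hadj huv).trans ih

/-- The set of `Y`-edges inverted between `σ` and `τ`. -/
def Dset (Y : SimpleGraph (Fin n)) (σ τ : Fin n ≃ Fin n) : Set (Sym2 (Fin n)) :=
  {e | e ∈ Y.edgeSet ∧ ∃ u v : Fin n, e = s(u, v) ∧
    σ.symm u < σ.symm v ∧ τ.symm v < τ.symm u}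

/-- If `σ ≠ τ` there is a descent: two consecutive positions out of `τ`-order. -/
lemma exists_descent {σ τ : Fin n ≃ Fin n} (hne : σ ≠ τ) :
    ∃ a b : Fin n, a.val + 1 = b.val ∧ τ.symm (σ b) < τ.symm (σ a) := by
  by_contra hcon
  push_neg at hcon
  apply hne
  have hinj : Function.Injective (fun i : Fin n => τ.symm (σ i)) :=
    τ.symm.injective.comp σ.injective
  have hmono : StrictMono (fun i : Fin n => τ.symm (σ i)) := by
    cases n with
    | zero => intro i; exact i.elim0
    | succ m =>
      rw [Fin.strictMono_iff_lt_succ]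
      intro i
      refine lt_of_le_of_ne (hcon i.castSucc i.succ (by simp)) fun he => ?_
      have := hinj he
      exact absurd this Fin.castSucc_lt_succ.ne
  have hid : (fun i : Fin n => τ.symm (σ i)) = id := by
    haveI : WellFoundedLT (Fin n) := inferInstance
    refine (hmono.range_inj strictMono_id).1 ?_
    rw [Set.range_id]
    exact Set.range_eq_univ.2 (τ.symm.surjective.comp σ.surjective)
  apply Equiv.ext
  intro i
  have : τ.symm (σ i) = i := congrFun hid i
  exact (Equiv.symm_apply_eq τ).1 this

end Aux

/-- For every `n ≥ 1` and every `n`-vertex simple graph `Y`, the diameter of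
any connected component of `FS(Path_n, Y)` is at most `|E(Y)|`. -/
theorem fs_path_component_diam_le_card_edges (n : ℕ) (hn : 1 ≤ n) (Y : SimpleGraph (Fin n))
    (σ τ : Fin n ≃ Fin n) (h : (FS (pathGraph n) Y).Reachable σ τ) :
    (FS (pathGraph n) Y).dist σ τ ≤ Y.edgeSet.ncard := by
  classical
  suffices H : ∀ N (σ' : Fin n ≃ Fin n), (FS (pathGraph n) Y).Reachable σ' τ →
      (Dset Y σ' τ).ncard ≤ N → (FS (pathGraph n) Y).dist σ' τ ≤ N by
    exact le_trans (H (Dset Y σ τ).ncard σ h le_rfl)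
      (Set.ncard_le_ncard (fun e he => he.1) (Set.toFinite _))
  intro N
  induction N with
  | zero =>
    intro σ' hr hcard
    rcases eq_or_ne σ' τ with rfl|hne
    · simp
    · exfalso
      obtain ⟨a, b, hab, hlt⟩ := exists_descent hne
      have hab' : a < b := by rw [Fin.lt_def]; omega
      have hYadj : Y.Adj (σ' a) (σ' b) := by
        by_contra hno
        have hiff := reach_order hr hno
        simp only [Equiv.symm_apply_apply] at hiff
        exact absurd (hiff.1 hab') (not_lt.2 hlt.le)
      have hmem : s(σ' a, σ' b) ∈ Dset Y σ' τ :=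
        ⟨Y.mem_edgeSet.2 hYadj, σ' a, σ' b, rfl, by simpa using hab', hlt⟩
      have := (Set.ncard_pos (Set.toFinite _)).2 ⟨_, hmem⟩
      omega
  | succ N ih =>
    intro σ' hr hcard
    rcases eq_or_ne σ' τ with rfl|hne
    · simp [SimpleGraph.dist_self]
    obtain ⟨a, b, hab, hlt⟩ := exists_descent hne
    have hab' : a < b := by rw [Fin.lt_def]; omega
    have hYadj : Y.Adj (σ' a) (σ' b) := by
      by_contra hno
      have hiff := reach_order hr hno
      simp only [Equiv.symm_apply_apply] at hiff
      exact absurd (hiff.1 hab') (not_lt.2 hlt.le)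
    set π : Fin n ≃ Fin n := (Equiv.swap a b).trans σ' with hπ
    have hadj : (FS (pathGraph n) Y).Adj σ' π := by
      refine ⟨a, b, ?_, hYadj, ?_, ?_, ?_⟩
      · rw [pathGraph_adj]; left; exact hab
      · simp [hπ]
      · simp [hπ]
      · intro c hca hcb; simp [hπ, Equiv.swap_apply_of_ne_of_ne hca hcb]
    have hπsymm : ∀ w, π.symm w = Equiv.swap a b (σ'.symm w) := by
      intro w; simp [hπ, Equiv.symm_trans_apply]
    have hrπ : (FS (pathGraph n) Y).Reachable π τ := (hadj.symm.reachable).trans hr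
    have hmem : s(σ' a, σ' b) ∈ Dset Y σ' τ :=
      ⟨Y.mem_edgeSet.2 hYadj, σ' a, σ' b, rfl, by simpa using hab', hlt⟩
    have hπu : π.symm (σ' a) = b := by rw [hπsymm]; simp
    have hπv : π.symm (σ' b) = a := by rw [hπsymm]; simp
    have hnotmem : s(σ' a, σ' b) ∉ Dset Y π τ := by
      rintro ⟨-, u', v', heq, h1, h2⟩
      rw [Sym2.eq_iff] at heq
      rcases heq with ⟨hu, hv⟩|⟨hu, hv⟩
      · rw [← hu, ← hv, hπu, hπv] at h1
        exact absurd h1 (not_lt.2 hab'.le)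
      · rw [← hu, ← hv] at h2
        exact absurd h2 (not_lt.2 hlt.le)
    have hsub : Dset Y π τ ⊆ Dset Y σ' τ := by
      rintro e ⟨hedge, u', v', rfl, h1, h2⟩
      refine ⟨hedge, u', v', rfl, ?_, h2⟩
      rw [hπsymm, hπsymm] at h1
      refine (swap_lt_swap hab ?_ ?_).2 h1
      · rintro ⟨hx, hy⟩
        rw [hx, hy, Equiv.swap_apply_left, Equiv.swap_apply_right] at h1
        exact absurd h1 (not_lt.2 hab'.le)
      · rintro ⟨hx, hy⟩
        have hu : u' = σ' b := by rw [← hx]; simp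
        have hv : v' = σ' a := by rw [← hy]; simp
        rw [hu, hv] at h2
        exact absurd h2 (not_lt.2 hlt.le)
    have hcard' : (Dset Y π τ).ncard ≤ N := by
      have hlt_card : (Dset Y π τ).ncard < (Dset Y σ' τ).ncard :=
        Set.ncard_lt_ncard ((Set.ssubset_iff_of_subset hsub).2 ⟨_, hmem, hnotmem⟩)
          (Set.toFinite _)
      omega
    obtain ⟨p, hp⟩ := hrπ.exists_walk_length_eq_dist
    calc (FS (pathGraph n) Y).dist σ' τ ≤ (Walk.cons hadj p).length := SimpleGraph.dist_le _
    _ = (FS (pathGraph n) Y).dist π τ + 1 := by simp [hp]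
    _ ≤ N + 1 := by exact Nat.add_le_add_right (ih π hrπ hcard') 1
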